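/- Under the Markov assumption X_S − X_0 − X_T for disjoint S,T ⊆ L, and v(S) = I(X_S; X_0 | X_{L\S}), the core of (L,v) equals the set of (R_l)_{l∈L} such that for every S ⊆ L, I(X_S; X_0) − I(X_S; X_{L\S}) ≤ Σ_{i∈S} R_i ≤ I(X_S; X_0). -/
import Mathlib


noncomputable section
open Finset
open scoped Classical BigOperators

/-- Probability of an event under a pmf on a finite sample space. -/
def Pr {Ω : Type} [Fintype Ω] (p : Ω → ℝ) (E : Ω → Prop) : ℝ :=
  ∑ ω : Ω, if E ω then p ω else 0

/-- `p` is a probability mass function. -/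
def IsPMF {Ω : Type} [Fintype Ω] (p : Ω → ℝ) : Prop :=
  (∀ ω, 0 ≤ p ω) ∧ (∑ ω : Ω, p ω) = 1

/-- Shannon entropy of a finitely-valued random variable `X` under pmf `p`. -/
def ent {Ω α : Type} [Fintype Ω] [Fintype α] (p : Ω → ℝ) (X : Ω → α) : ℝ :=
  -∑ a : α, Pr p (fun ω => X ω = a) * Real.log (Pr p (fun ω => X ω = a))

/-- Conditional Shannon entropy `H(X|Y)`. -/
def condEnt {Ω α β : Type} [Fintype Ω] [Fintype α] [Fintype β]
    (p : Ω → ℝ) (X : Ω → α) (Y : Ω → β) : ℝ :=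
  ent p (fun ω => (X ω, Y ω)) - ent p Y

/-- Mutual information `I(X;Y)`. -/
def mi {Ω α β : Type} [Fintype Ω] [Fintype α] [Fintype β]
    (p : Ω → ℝ) (X : Ω → α) (Y : Ω → β) : ℝ :=
  ent p X + ent p Y - ent p (fun ω => (X ω, Y ω))

/-- Conditional mutual information `I(X;Y|Z)`. -/
def cmi {Ω α β γ : Type} [Fintype Ω] [Fintype α] [Fintype β] [Fintype γ]
    (p : Ω → ℝ) (X : Ω → α) (Y : Ω → β) (Z : Ω → γ) : ℝ :=
  ent p (fun ω => (X ω, Z ω)) + ent p (fun ω => (Y ω, Z ω))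
    - ent p (fun ω => (X ω, Y ω, Z ω)) - ent p Z

/-- `X` and `Y` are conditionally independent given `Z` (Markov chain `X - Z - Y`). -/
def CondIndep {Ω α β γ : Type} [Fintype Ω] [Fintype α] [Fintype β] [Fintype γ]
    (p : Ω → ℝ) (X : Ω → α) (Y : Ω → β) (Z : Ω → γ) : Prop :=
  ∀ (a : α) (b : β) (c : γ),
    Pr p (fun ω => X ω = a ∧ Y ω = b ∧ Z ω = c) * Pr p (fun ω => Z ω = c)
      = Pr p (fun ω => X ω = a ∧ Z ω = c) * Pr p (fun ω => Y ω = b ∧ Z ω = c)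

/-- The tuple random variable `X_S = (X_l)_{l ∈ S}`. -/
def XS {Ω L 𝒳 : Type} [Fintype Ω] (X : L → Ω → 𝒳) (S : Finset L) :
    Ω → (S → 𝒳) :=
  fun ω i => X i ω

/-- The value function of the secret-key generation game:
`v(S) = I(X_S; X_0 | X_{L\S})`. -/
def vGame {Ω L 𝒳 β : Type} [Fintype Ω] [Fintype L] [DecidableEq L] [Fintype 𝒳] [Fintype β]
    (p : Ω → ℝ) (X : L → Ω → 𝒳) (X0 : Ω → β) (S : Finset L) : ℝ :=
  cmi p (XS X S) X0 (XS X Sᶜ)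


section Helpers

variable {Ω : Type} [Fintype Ω]

lemma Pr_congr {p : Ω → ℝ} {E F : Ω → Prop} (h : ∀ ω, E ω ↔ F ω) : Pr p E = Pr p F := by
  unfold Pr
  exact Finset.sum_congr rfl fun ω _ => by simp [h ω]

lemma Pr_nonneg {p : Ω → ℝ} (hp : ∀ ω, 0 ≤ p ω) (E : Ω → Prop) : 0 ≤ Pr p E :=
  Finset.sum_nonneg fun ω _ => by by_cases h : E ω <;> simp [h, hp ω]

lemma Pr_mono {p : Ω → ℝ} (hp : ∀ ω, 0 ≤ p ω) {E F : Ω → Prop}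
    (h : ∀ ω, E ω → F ω) : Pr p E ≤ Pr p F := by
  apply Finset.sum_le_sum
  intro ω _
  by_cases hE : E ω
  · simp [hE, h ω hE]
  · by_cases hF : F ω <;> simp [hE, hF, hp ω]

lemma Pr_total {p : Ω → ℝ} (hp : IsPMF p) {E : Ω → Prop} (h : ∀ ω, E ω) : Pr p E = 1 := by
  unfold Pr
  rw [← hp.2]
  exact Finset.sum_congr rfl fun ω _ => if_pos (h ω)

lemma Pr_sum (p : Ω → ℝ) {β : Type} [Fintype β] (E : Ω → Prop) (Y : Ω → β) :
    ∑ b : β, Pr p (fun ω => E ω ∧ Y ω = b) = Pr p E := by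
  unfold Pr
  rw [Finset.sum_comm]
  refine Finset.sum_congr rfl fun ω _ => ?_
  by_cases hE : E ω <;> simp [hE]

lemma ent_comp {α α' : Type} [Fintype α] [Fintype α'] (p : Ω → ℝ) {f : α → α'}
    (hf : Function.Injective f) (X : Ω → α) :
    ent p (fun ω => f (X ω)) = ent p X := by
  unfold ent
  congr 1
  have h0 : ∀ a' ∈ (Finset.univ : Finset α'), a' ∉ Finset.image f Finset.univ →
      Pr p (fun ω => f (X ω) = a') * Real.log (Pr p (fun ω => f (X ω) = a')) = 0 := by
    intro a' _ ha'
    have hz : Pr p (fun ω => f (X ω) = a') = 0 := by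
      unfold Pr
      apply Finset.sum_eq_zero
      intro ω _
      rw [if_neg]
      exact fun h => ha' (Finset.mem_image.2 ⟨X ω, Finset.mem_univ _, h⟩)
    rw [hz, zero_mul]
  rw [← Finset.sum_subset (Finset.subset_univ (Finset.image f Finset.univ)) h0,
    Finset.sum_image (fun x _ y _ h => hf h)]
  refine Finset.sum_congr rfl fun a _ => ?_
  rw [Pr_congr (fun ω => hf.eq_iff (a := X ω) (b := a))]

lemma ent_swap {α β' : Type} [Fintype α] [Fintype β'] (p : Ω → ℝ) (A : Ω → α) (B : Ω → β') :
    ent p (fun ω => (A ω, B ω)) = ent p (fun ω => (B ω, A ω)) := by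
  have hinj : Function.Injective (fun x : β' × α => (x.2, x.1)) := by
    intro x y hxy
    obtain ⟨x1, x2⟩ := x; obtain ⟨y1, y2⟩ := y
    simp_all [Prod.ext_iff, and_comm]
  exact ent_comp p hinj (fun ω => (B ω, A ω))

lemma ent_reorder {α β' γ : Type} [Fintype α] [Fintype β'] [Fintype γ] (p : Ω → ℝ)
    (A : Ω → α) (B : Ω → β') (C : Ω → γ) :
    ent p (fun ω => (A ω, C ω, B ω)) = ent p (fun ω => (A ω, B ω, C ω)) := by
  have hinj : Function.Injective (fun x : α × β' × γ => (x.1, x.2.2, x.2.1)) := by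
    intro x y hxy
    obtain ⟨x1, x2, x3⟩ := x; obtain ⟨y1, y2, y3⟩ := y
    simp_all [Prod.ext_iff]
  exact ent_comp p hinj (fun ω => (A ω, B ω, C ω))

lemma ent_unique {γ' : Type} [Fintype γ'] [Unique γ'] {p : Ω → ℝ} (hp : IsPMF p)
    (C : Ω → γ') : ent p C = 0 := by
  unfold ent
  rw [Fintype.sum_unique, Pr_total hp (fun ω => Unique.eq_default _)]
  simp

lemma ent_pair_unique_right {α γ' : Type} [Fintype α] [Fintype γ'] [Unique γ']
    (p : Ω → ℝ) (X : Ω → α) (C : Ω → γ') :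
    ent p (fun ω => (X ω, C ω)) = ent p X := by
  have hinj : Function.Injective (fun a : α => (a, (default : γ'))) :=
    fun x y h => congrArg Prod.fst h
  have h := ent_comp p hinj X
  rw [← h]
  congr 1
  funext ω
  exact congrArg (fun z => (X ω, z)) (Subsingleton.elim (C ω) default)

lemma mi_unique_right {α γ' : Type} [Fintype α] [Fintype γ'] [Unique γ']
    {p : Ω → ℝ} (hp : IsPMF p) (X : Ω → α) (C : Ω → γ') : mi p X C = 0 := by
  unfold mi
  rw [ent_pair_unique_right, ent_unique hp C]
  ring

lemma mi_unique_left {α γ' : Type} [Fintype α] [Fintype γ'] [Unique γ']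
    {p : Ω → ℝ} (hp : IsPMF p) (X : Ω → α) (C : Ω → γ') : mi p C X = 0 := by
  unfold mi
  rw [ent_swap, ent_pair_unique_right, ent_unique hp C]
  ring

/-- The key entropy identity under conditional independence:
`H(A,B,C) + H(C) = H(A,C) + H(B,C)`. -/
lemma ent_condIndep {α β' γ : Type} [Fintype α] [Fintype β'] [Fintype γ]
    {p : Ω → ℝ} (hp : IsPMF p) (A : Ω → α) (B : Ω → β') (C : Ω → γ)
    (h : CondIndep p A B C) :
    ent p (fun ω => (A ω, B ω, C ω)) + ent p C
      = ent p (fun ω => (A ω, C ω)) + ent p (fun ω => (B ω, C ω)) := by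
  set q3 : α → β' → γ → ℝ := fun a b c => Pr p (fun ω => A ω = a ∧ B ω = b ∧ C ω = c) with hq3
  set qac : α → γ → ℝ := fun a c => Pr p (fun ω => A ω = a ∧ C ω = c) with hqac
  set qbc : β' → γ → ℝ := fun b c => Pr p (fun ω => B ω = b ∧ C ω = c) with hqbc
  set qc : γ → ℝ := fun c => Pr p (fun ω => C ω = c) with hqc
  -- marginalization facts
  have mac : ∀ a c, ∑ b : β', q3 a b c = qac a c := by
    intro a c
    rw [hqac]
    dsimp only
    rw [← Pr_sum p (fun ω => A ω = a ∧ C ω = c) B]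
    exact Finset.sum_congr rfl fun b _ => Pr_congr (fun ω => by tauto)
  have mbc : ∀ b c, ∑ a : α, q3 a b c = qbc b c := by
    intro b c
    rw [hqbc]
    dsimp only
    rw [← Pr_sum p (fun ω => B ω = b ∧ C ω = c) A]
    exact Finset.sum_congr rfl fun a _ => Pr_congr (fun ω => by tauto)
  have mc : ∀ c, ∑ a : α, qac a c = qc c := by
    intro c
    rw [hqc]
    dsimp only
    rw [← Pr_sum p (fun ω => C ω = c) A]
    exact Finset.sum_congr rfl fun a _ => Pr_congr (fun ω => by tauto)
  -- expressing the entropies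
  have pr3 : ∀ x : α × β' × γ,
      Pr p (fun ω => (A ω, B ω, C ω) = x) = q3 x.1 x.2.1 x.2.2 := by
    rintro ⟨a, b, c⟩
    exact Pr_congr (fun ω => by simp [Prod.ext_iff])
  have prac : ∀ x : α × γ, Pr p (fun ω => (A ω, C ω) = x) = qac x.1 x.2 := by
    rintro ⟨a, c⟩
    exact Pr_congr (fun ω => by simp [Prod.ext_iff])
  have prbc : ∀ x : β' × γ, Pr p (fun ω => (B ω, C ω) = x) = qbc x.1 x.2 := by
    rintro ⟨b, c⟩
    exact Pr_congr (fun ω => by simp [Prod.ext_iff])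
  have e3 : ent p (fun ω => (A ω, B ω, C ω))
      = -∑ a : α, ∑ b : β', ∑ c : γ, q3 a b c * Real.log (q3 a b c) := by
    unfold ent
    simp only [pr3, Fintype.sum_prod_type]
  have eac : ent p (fun ω => (A ω, C ω))
      = -∑ a : α, ∑ c : γ, qac a c * Real.log (qac a c) := by
    unfold ent
    simp only [prac, Fintype.sum_prod_type]
  have ebc : ent p (fun ω => (B ω, C ω))
      = -∑ b : β', ∑ c : γ, qbc b c * Real.log (qbc b c) := by
    unfold ent
    simp only [prbc, Fintype.sum_prod_type]
  have ec : ent p C = -∑ c : γ, qc c * Real.log (qc c) := by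
    unfold ent
    rfl
  -- pointwise identity
  have pt : ∀ a b c, q3 a b c * Real.log (q3 a b c)
      = q3 a b c * (Real.log (qac a c) + Real.log (qbc b c) - Real.log (qc c)) := by
    intro a b c
    have hnn : (0:ℝ) ≤ q3 a b c := Pr_nonneg hp.1 _
    rcases eq_or_lt_of_le hnn with h0 | h0
    · rw [← h0, zero_mul, zero_mul]
    · have hhac : (0:ℝ) < qac a c :=
        lt_of_lt_of_le h0 (Pr_mono hp.1 (fun ω hw => ⟨hw.1, hw.2.2⟩))
      have hhbc : (0:ℝ) < qbc b c :=
        lt_of_lt_of_le h0 (Pr_mono hp.1 (fun ω hw => ⟨hw.2.1, hw.2.2⟩))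
      have hhc : (0:ℝ) < qc c :=
        lt_of_lt_of_le h0 (Pr_mono hp.1 (fun ω hw => hw.2.2))
      have heq : q3 a b c = qac a c * qbc b c / qc c := by
        rw [eq_div_iff hhc.ne']
        exact h a b c
      rw [heq, Real.log_div (mul_ne_zero hhac.ne' hhbc.ne') hhc.ne',
        Real.log_mul hhac.ne' hhbc.ne']
  -- main sum identity
  have main : ∑ a : α, ∑ b : β', ∑ c : γ, q3 a b c * Real.log (q3 a b c)
      = (∑ a : α, ∑ c : γ, qac a c * Real.log (qac a c))
        + (∑ b : β', ∑ c : γ, qbc b c * Real.log (qbc b c))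
        - ∑ c : γ, qc c * Real.log (qc c) := by
    have step1 : ∑ a : α, ∑ b : β', ∑ c : γ, q3 a b c * Real.log (q3 a b c)
        = (∑ a : α, ∑ b : β', ∑ c : γ, q3 a b c * Real.log (qac a c))
          + (∑ a : α, ∑ b : β', ∑ c : γ, q3 a b c * Real.log (qbc b c))
          - ∑ a : α, ∑ b : β', ∑ c : γ, q3 a b c * Real.log (qc c) := by
      simp only [pt, mul_add, mul_sub, Finset.sum_add_distrib, Finset.sum_sub_distrib]
    have M1 : ∑ a : α, ∑ b : β', ∑ c : γ, q3 a b c * Real.log (qac a c)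
        = ∑ a : α, ∑ c : γ, qac a c * Real.log (qac a c) := by
      refine Finset.sum_congr rfl fun a _ => ?_
      rw [Finset.sum_comm]
      refine Finset.sum_congr rfl fun c _ => ?_
      rw [← Finset.sum_mul, mac]
    have M2 : ∑ a : α, ∑ b : β', ∑ c : γ, q3 a b c * Real.log (qbc b c)
        = ∑ b : β', ∑ c : γ, qbc b c * Real.log (qbc b c) := by
      rw [Finset.sum_comm]
      refine Finset.sum_congr rfl fun b _ => ?_
      rw [Finset.sum_comm]
      refine Finset.sum_congr rfl fun c _ => ?_
      rw [← Finset.sum_mul, mbc]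
    have M3 : ∑ a : α, ∑ b : β', ∑ c : γ, q3 a b c * Real.log (qc c)
        = ∑ c : γ, qc c * Real.log (qc c) := by
      have haux : ∀ a, ∑ b : β', ∑ c : γ, q3 a b c * Real.log (qc c)
          = ∑ c : γ, qac a c * Real.log (qc c) := by
        intro a
        rw [Finset.sum_comm]
        refine Finset.sum_congr rfl fun c _ => ?_
        rw [← Finset.sum_mul, mac]
      simp only [haux]
      rw [Finset.sum_comm]
      refine Finset.sum_congr rfl fun c _ => ?_
      rw [← Finset.sum_mul, mc]
    rw [step1, M1, M2, M3]
  rw [e3, eac, ebc, ec, main]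
  ring

end Helpers

section GameHelpers

variable {Ω L 𝒳 β : Type} [Fintype Ω] [Fintype L] [DecidableEq L] [Fintype 𝒳] [Fintype β]

/-- `H(X_S, X_{Sᶜ}) = H(X_L)`. -/
lemma ent_XS_pair (p : Ω → ℝ) (X : L → Ω → 𝒳) (S : Finset L) :
    ent p (fun ω => (XS X S ω, XS X Sᶜ ω)) = ent p (XS X Finset.univ) := by
  have hf : Function.Injective
      (fun g : (↥(Finset.univ : Finset L) → 𝒳) =>
        ((fun i : ↥S => g ⟨i.1, Finset.mem_univ _⟩),
         (fun i : ↥Sᶜ => g ⟨i.1, Finset.mem_univ _⟩))) := by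
    intro g g' hgg
    funext i
    by_cases hi : i.1 ∈ S
    · exact congrFun (congrArg Prod.fst hgg) ⟨i.1, hi⟩
    · exact congrFun (congrArg Prod.snd hgg) ⟨i.1, Finset.mem_compl.2 hi⟩
  exact ent_comp p hf (XS X Finset.univ)

/-- `H(X_S, X_{Sᶜ}, X0) = H(X_L, X0)`. -/
lemma ent_XS_triple (p : Ω → ℝ) (X : L → Ω → 𝒳) (X0 : Ω → β) (S : Finset L) :
    ent p (fun ω => (XS X S ω, XS X Sᶜ ω, X0 ω))
      = ent p (fun ω => (XS X Finset.univ ω, X0 ω)) := by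
  have hf : Function.Injective
      (fun gz : (↥(Finset.univ : Finset L) → 𝒳) × β =>
        ((fun i : ↥S => gz.1 ⟨i.1, Finset.mem_univ _⟩),
         ((fun i : ↥Sᶜ => gz.1 ⟨i.1, Finset.mem_univ _⟩), gz.2))) := by
    rintro ⟨g, z⟩ ⟨g', z'⟩ hgg
    simp only [Prod.ext_iff] at hgg
    refine Prod.ext ?_ hgg.2.2
    funext i
    by_cases hi : i.1 ∈ S
    · exact congrFun hgg.1 ⟨i.1, hi⟩
    · exact congrFun hgg.2.1 ⟨i.1, Finset.mem_compl.2 hi⟩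
  exact ent_comp p hf (fun ω => (XS X Finset.univ ω, X0 ω))

lemma mi_congr_right {α : Type} [Fintype α] (p : Ω → ℝ) (A : Ω → α) (X : L → Ω → 𝒳)
    {T U : Finset L} (h : T = U) : mi p A (XS X T) = mi p A (XS X U) := by
  subst h; rfl

/-- `v(S) = I(X_S; X0) - I(X_S; X_{Sᶜ})` under the Markov assumption. -/
lemma vGame_eq (p : Ω → ℝ) (hp : IsPMF p) (X : L → Ω → 𝒳) (X0 : Ω → β)
    (hM : ∀ S T : Finset L, Disjoint S T → CondIndep p (XS X S) (XS X T) X0)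
    (S : Finset L) :
    vGame p X X0 S = mi p (XS X S) X0 - mi p (XS X S) (XS X Sᶜ) := by
  have hcore := ent_condIndep hp (XS X S) (XS X Sᶜ) X0
    (hM S Sᶜ disjoint_compl_right)
  have f1 : ent p (fun ω => (X0 ω, XS X Sᶜ ω)) = ent p (fun ω => (XS X Sᶜ ω, X0 ω)) :=
    ent_swap p X0 (XS X Sᶜ)
  have f2 : ent p (fun ω => (XS X S ω, X0 ω, XS X Sᶜ ω))
      = ent p (fun ω => (XS X S ω, XS X Sᶜ ω, X0 ω)) :=
    ent_reorder p (XS X S) (XS X Sᶜ) X0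
  unfold vGame cmi mi
  rw [f1, f2]
  linarith [hcore]

/-- The key identity: `I(X_L;X0) + I(X_{Sᶜ};X_S) = I(X_S;X0) + I(X_{Sᶜ};X0)`. -/
lemma mi_split (p : Ω → ℝ) (hp : IsPMF p) (X : L → Ω → 𝒳) (X0 : Ω → β)
    (hM : ∀ S T : Finset L, Disjoint S T → CondIndep p (XS X S) (XS X T) X0)
    (S : Finset L) :
    mi p (XS X Finset.univ) X0 + mi p (XS X Sᶜ) (XS X S)
      = mi p (XS X S) X0 + mi p (XS X Sᶜ) X0 := by
  have hcore := ent_condIndep hp (XS X S) (XS X Sᶜ) X0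
    (hM S Sᶜ disjoint_compl_right)
  have e1 := ent_XS_pair p X S
  have e2 := ent_XS_triple p X X0 S
  have e3 : ent p (fun ω => (XS X Sᶜ ω, XS X S ω)) = ent p (fun ω => (XS X S ω, XS X Sᶜ ω)) :=
    ent_swap p (XS X Sᶜ) (XS X S)
  unfold mi
  linarith [hcore, e1, e2, e3]

end GameHelpers


/-- the core of the game `(L, v)` with `v(S) = I(X_S;X_0|X_{L\S})`
is the set of rate vectors `(R_l)` with
`I(X_S;X_0) - I(X_S;X_{L\S}) ≤ Σ_S R ≤ I(X_S;X_0)` for all `S ⊆ L`. -/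
theorem statement7 {Ω L 𝒳 β : Type} [Fintype Ω] [Fintype L] [DecidableEq L] [Fintype 𝒳] [Fintype β]
    (p : Ω → ℝ) (hp : IsPMF p) (X : L → Ω → 𝒳) (X0 : Ω → β)
    (hM : ∀ S T : Finset L, Disjoint S T → CondIndep p (XS X S) (XS X T) X0)
    (R : L → ℝ) :
    ((∑ l : L, R l = vGame p X X0 Finset.univ) ∧
      ∀ S : Finset L, S ⊂ Finset.univ → vGame p X X0 S ≤ ∑ i ∈ S, R i)
    ↔ (∀ S : Finset L,
        mi p (XS X S) X0 - mi p (XS X S) (XS X Sᶜ) ≤ ∑ i ∈ S, R i ∧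
        ∑ i ∈ S, R i ≤ mi p (XS X S) X0) := by
  have hA := vGame_eq p hp X X0 hM
  -- `X_{univᶜ}` is a constant random variable
  haveI : IsEmpty ((Finset.univ : Finset L)ᶜ : Finset L) :=
    ⟨fun i => by have := i.2; simp at this⟩
  have hmi0 : mi p (XS X Finset.univ) (XS X (Finset.univ : Finset L)ᶜ) = 0 :=
    mi_unique_right hp _ _
  have hB : vGame p X X0 Finset.univ = mi p (XS X Finset.univ) X0 := by
    rw [hA Finset.univ, hmi0, sub_zero]
  -- `v(univ) - v(Sᶜ) = I(X_S; X0)` for every `S`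
  have hC : ∀ S : Finset L,
      vGame p X X0 Finset.univ - vGame p X X0 Sᶜ = mi p (XS X S) X0 := by
    intro S
    have h1 := hA Sᶜ
    rw [mi_congr_right p (XS X Sᶜ) X (compl_compl S)] at h1
    have h2 := mi_split p hp X X0 hM S
    rw [hB, h1]
    linarith
  constructor
  · rintro ⟨hsum, hcore⟩ S
    constructor
    · rw [← hA S]
      rcases eq_or_ne S Finset.univ with rfl | hS
      · exact le_of_eq hsum.symm
      · exact hcore S (Finset.ssubset_univ_iff.2 hS)
    · rcases eq_or_ne S ∅ with rfl | hS
      · haveI : IsEmpty ((∅ : Finset L) : Finset L) :=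
          ⟨fun i => absurd i.2 (Finset.notMem_empty _)⟩
        rw [Finset.sum_empty, mi_unique_left hp]
      · have hSc : Sᶜ ⊂ Finset.univ := by
          rw [Finset.ssubset_univ_iff]
          intro hcon
          exact hS (by simpa using congrArg compl hcon)
        have h1 := hcore Sᶜ hSc
        have h2 : ∑ i ∈ S, R i + ∑ i ∈ Sᶜ, R i = ∑ l : L, R l :=
          Finset.sum_add_sum_compl S R
        have h3 := hC S
        linarith
  · intro h
    have hu := h Finset.univ
    rw [hmi0, sub_zero] at hu
    have hsum : ∑ l : L, R l = vGame p X X0 Finset.univ := by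
      rw [hB]
      have : ∑ i ∈ Finset.univ, R i = ∑ l : L, R l := rfl
      linarith [hu.1, hu.2]
    refine ⟨hsum, fun S _ => ?_⟩
    rw [hA S]
    exact (h S).1
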